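/- Let n be a positive integer and let s_1, s_2, …, s_n be independent random variables, each uniformly distributed on {1, 2, …, n}. Let y = max{k : 1 ≤ k ≤ n and s_1, …, s_k are pairwise distinct}. Then the probability that the value 1 appears among s_1, …, s_y (i.e., before the first repetition) equals R_1(n)/n = (1/n)·Σ_{k=1}^{n} p_k(n)·k. -/

import Mathlib

open scoped Classical

/-- `p_k(n) = n!·k/((n−k)!·n^(k+1))`. -/
noncomputable def p (n k : ℕ) : ℝ :=
  (n.factorial : ℝ) * k / (((n - k).factorial : ℝ) * (n : ℝ) ^ (k + 1))

/-- `R_1(n) = Σ_{k=1}^{n} p_k(n)·k`. -/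
noncomputable def R1 (n : ℕ) : ℝ := ∑ k ∈ Finset.Icc 1 n, p n k * (k : ℝ)

/-- The first `m` values `s_1, …, s_m` of `s` are pairwise distinct, with `1 ≤ m ≤ n`. -/
def prefixDistinct (n : ℕ) (s : Fin n → Fin n) (m : ℕ) : Prop :=
  1 ≤ m ∧ m ≤ n ∧ ∀ i j : Fin n, (i : ℕ) < m → (j : ℕ) < m → s i = s j → i = j

/-- `y(s) = max{k : 1 ≤ k ≤ n and s_1, …, s_k are pairwise distinct}`. -/
noncomputable def y (n : ℕ) (s : Fin n → Fin n) : ℕ :=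
  Nat.findGreatest (prefixDistinct n s) n

section Aux

variable {n : ℕ}

/-- distinctness of the first `k` values -/
def Q (n k : ℕ) (s : Fin n → Fin n) : Prop :=
  ∀ i j : Fin n, (i : ℕ) < k → (j : ℕ) < k → s i = s j → i = j

lemma Q_mono {s : Fin n → Fin n} {m k : ℕ} (h : m ≤ k) (hk : Q n k s) : Q n m s :=
  fun i j hi hj hij => hk i j (lt_of_lt_of_le hi h) (lt_of_lt_of_le hj h) hij

lemma y_eq_iff_of_lt {s : Fin n → Fin n} {k : ℕ} (hk1 : 1 ≤ k) (hkn : k < n) :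
    y n s = k ↔ Q n k s ∧ ∃ i : Fin n, (i : ℕ) < k ∧ s i = s ⟨k, hkn⟩ := by
  rw [y, Nat.findGreatest_eq_iff]
  constructor
  · rintro ⟨hle, hP, hnot⟩
    have hQ : Q n k s := (hP (by omega)).2.2
    have hnP : ¬ prefixDistinct n s (k + 1) := hnot (by omega) (by omega)
    refine ⟨hQ, ?_⟩
    simp only [prefixDistinct, not_and, not_forall] at hnP
    obtain ⟨i, j, hi, hj, hij, hne⟩ := hnP (by omega) (by omega)
    by_cases hik : (i : ℕ) < k
    · by_cases hjk : (j : ℕ) < k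
      · exact absurd (hQ i j hik hjk hij) hne
      · have : (j : ℕ) = k := by omega
        exact ⟨i, hik, by rw [hij]; congr 1; exact Fin.ext this⟩
    · have hik' : (i : ℕ) = k := by omega
      have hjk : (j : ℕ) < k := by
        rcases Nat.lt_succ_iff_lt_or_eq.1 hj with h | h
        · exact h
        · exact absurd (Fin.ext (hik'.trans h.symm)) hne
      exact ⟨j, hjk, by rw [← hij]; congr 1; exact Fin.ext hik'⟩
  · rintro ⟨hQ, i, hik, hsi⟩
    refine ⟨hkn.le, fun _ => ⟨hk1, hkn.le, hQ⟩, fun m hm hmn hP => ?_⟩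
    have hQm : Q n (k + 1) s := Q_mono (by omega) hP.2.2
    have : i = ⟨k, hkn⟩ := hQm i ⟨k, hkn⟩ (by omega) (by simp) hsi
    rw [this] at hik
    exact absurd hik (by simp)

lemma y_eq_n_iff (hn : 0 < n) {s : Fin n → Fin n} :
    y n s = n ↔ Function.Injective s := by
  rw [y, Nat.findGreatest_eq_iff]
  constructor
  · rintro ⟨-, hP, -⟩
    intro i j hij
    exact (hP (by omega)).2.2 i j i.2 j.2 hij
  · intro hinj
    exact ⟨le_refl _, fun _ => ⟨hn, le_refl _, fun i j _ _ h => hinj h⟩, fun m hm hmn => by omega⟩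

lemma y_le (s : Fin n → Fin n) : y n s ≤ n := Nat.findGreatest_le n

lemma y_ge_one (hn : 0 < n) (s : Fin n → Fin n) : 1 ≤ y n s :=
  Nat.le_findGreatest hn ⟨le_refl _, hn, fun i j hi hj _ => Fin.ext (by omega)⟩

variable {k : ℕ}

def injEquivEmb (z : Fin n) :
    {g : Fin k → Fin n // Function.Injective g ∧ ∀ i, g i ≠ z} ≃ (Fin k ↪ {x : Fin n // x ≠ z}) where
  toFun g := ⟨fun i => ⟨g.1 i, g.2.2 i⟩, fun i j h => g.2.1 (by simpa [Subtype.ext_iff] using h)⟩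
  invFun e := ⟨fun i => (e i).1, ⟨fun i j h => e.injective (Subtype.ext h), fun i => (e i).2⟩⟩
  left_inv g := rfl
  right_inv e := by ext i; rfl

lemma card_ne (z : Fin n) : Fintype.card {x : Fin n // x ≠ z} = n - 1 := by
  have := Fintype.card_subtype_compl (fun x : Fin n => x = z)
  simpa [Fintype.card_subtype_eq] using this

lemma card_inj :
    (Finset.univ.filter fun g : Fin k → Fin n => Function.Injective g).card
      = n.descFactorial k := by
  rw [← Fintype.card_subtype]
  rw [Fintype.card_congr (Equiv.subtypeInjectiveEquivEmbedding (Fin k) (Fin n))]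
  rw [Fintype.card_embedding_eq]
  simp

lemma cardS (z : Fin n) :
    (Finset.univ.filter fun g : Fin k → Fin n =>
        Function.Injective g ∧ ∃ i, g i = z).card
      = n.descFactorial k - (n - 1).descFactorial k := by
  have hA := card_inj (n := n) (k := k)
  have hB : (Finset.univ.filter fun g : Fin k → Fin n =>
      Function.Injective g ∧ ∀ i, g i ≠ z).card = (n - 1).descFactorial k := by
    rw [← Fintype.card_subtype]
    rw [Fintype.card_congr (injEquivEmb z)]
    rw [Fintype.card_embedding_eq, card_ne]
    simp
  have key := Finset.card_filter_add_card_filter_not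
    (s := Finset.univ.filter fun g : Fin k → Fin n => Function.Injective g)
    (p := fun g => ∃ i, g i = z)
  rw [Finset.filter_filter, Finset.filter_filter] at key
  push_neg at key
  rw [hA, hB] at key
  exact Nat.eq_sub_of_add_eq key

/-- glue a prefix, repeat position, and tail into a sequence -/
def glue {n k : ℕ} (hkn : k < n) (g : Fin k → Fin n) (i : Fin k)
    (t : Fin (n - (k + 1)) → Fin n) : Fin n → Fin n := fun j =>
  if h : (j : ℕ) < k then g ⟨j, h⟩
  else if h' : (j : ℕ) = k then g i
  else t ⟨(j : ℕ) - (k + 1), by have := j.isLt; omega⟩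

lemma glue_lt {n k : ℕ} (hkn : k < n) (g : Fin k → Fin n) (i : Fin k)
    (t : Fin (n - (k + 1)) → Fin n) (j : Fin n) (h : (j : ℕ) < k) :
    glue hkn g i t j = g ⟨j, h⟩ := dif_pos h

lemma glue_k {n k : ℕ} (hkn : k < n) (g : Fin k → Fin n) (i : Fin k)
    (t : Fin (n - (k + 1)) → Fin n) :
    glue hkn g i t ⟨k, hkn⟩ = g i := by
  unfold glue; rw [dif_neg (by simp), dif_pos rfl]

lemma glue_hi {n k : ℕ} (hkn : k < n) (g : Fin k → Fin n) (i : Fin k)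
    (t : Fin (n - (k + 1)) → Fin n) (b : Fin (n - (k + 1))) :
    glue hkn g i t ⟨k + 1 + b, by have := b.isLt; omega⟩ = t b := by
  unfold glue
  rw [dif_neg (by show ¬(k + 1 + (b : ℕ) < k); omega),
    dif_neg (by show ¬(k + 1 + (b : ℕ) = k); omega)]
  congr 1
  exact Fin.ext (by show k + 1 + (b : ℕ) - (k + 1) = b; omega)

lemma card_Ck (hk1 : 1 ≤ k) (hkn : k < n) (z : Fin n) :
    (Finset.univ.filter fun s : Fin n → Fin n =>
        y n s = k ∧ ∃ i : Fin n, (i : ℕ) < k ∧ s i = z).card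
      = (n.descFactorial k - (n - 1).descFactorial k) * (k * n ^ (n - (k + 1))) := by
  classical
  set S := Finset.univ.filter fun g : Fin k → Fin n =>
    Function.Injective g ∧ ∃ i, g i = z with hS
  have main : (S ×ˢ (Finset.univ : Finset (Fin k × (Fin (n - (k + 1)) → Fin n)))).card
      = (Finset.univ.filter fun s : Fin n → Fin n =>
        y n s = k ∧ ∃ i : Fin n, (i : ℕ) < k ∧ s i = z).card := by
    refine Finset.card_bij (fun a _ => glue hkn a.1 a.2.1 a.2.2) ?_ ?_ ?_
    · rintro ⟨g, i, t⟩ ha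
      simp only [Finset.mem_product, Finset.mem_filter, Finset.mem_univ, true_and, hS] at ha
      obtain ⟨⟨hginj, a, hga⟩, -⟩ := ha
      simp only [Finset.mem_filter, Finset.mem_univ, true_and]
      have hQ : Q n k (glue hkn g i t) := by
        intro i' j' hi' hj' hij
        rw [glue_lt hkn g i t i' hi', glue_lt hkn g i t j' hj'] at hij
        have h2 : ((⟨(i' : ℕ), hi'⟩ : Fin k) : ℕ) = ((⟨(j' : ℕ), hj'⟩ : Fin k) : ℕ) :=
          congrArg Fin.val (hginj hij)
        exact Fin.ext h2
      constructor
      · rw [y_eq_iff_of_lt hk1 hkn]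
        refine ⟨hQ, ⟨i, by have := i.isLt; omega⟩, by simp, ?_⟩
        rw [glue_lt hkn g i t _ (by simp [i.isLt]), glue_k]
      · refine ⟨⟨a, by have := a.isLt; omega⟩, by simp [a.isLt], ?_⟩
        rw [glue_lt hkn g i t _ (by simp [a.isLt]), ← hga]
    · rintro ⟨g, i, t⟩ ha ⟨g', i', t'⟩ ha' heq
      replace heq : glue hkn g i t = glue hkn g' i' t' := heq
      simp only [Finset.mem_product, Finset.mem_filter, Finset.mem_univ, true_and, hS] at ha ha'
      have hg : g = g' := by
        funext a
        have := congrFun heq ⟨a, by have := a.isLt; omega⟩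
        rwa [glue_lt hkn g i t _ (by simp [a.isLt]),
          glue_lt hkn g' i' t' _ (by simp [a.isLt])] at this
      have hi : i = i' := by
        have := congrFun heq ⟨k, hkn⟩
        rw [glue_k, glue_k, ← hg] at this
        exact ha.1.1 this
      have ht : t = t' := by
        funext b
        have := congrFun heq ⟨k + 1 + b, by have := b.isLt; omega⟩
        rwa [glue_hi, glue_hi] at this
      rw [Prod.ext_iff, Prod.ext_iff]
      exact ⟨hg, hi, ht⟩
    · intro s hs
      simp only [Finset.mem_filter, Finset.mem_univ, true_and] at hs
      obtain ⟨hy, w, hwk, hwz⟩ := hs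
      rw [y_eq_iff_of_lt hk1 hkn] at hy
      obtain ⟨hQ, i0, hi0k, hi0⟩ := hy
      refine ⟨⟨fun a => s ⟨a, by have := a.isLt; omega⟩,
        ⟨i0, hi0k⟩, fun b => s ⟨k + 1 + b, by have := b.isLt; omega⟩⟩, ?_, ?_⟩
      · simp only [Finset.mem_product, Finset.mem_filter, Finset.mem_univ, true_and, hS]
        refine ⟨⟨?_, ⟨w, hwk⟩, ?_⟩, trivial⟩
        · intro a b hab
          have h2 := hQ ⟨a, by have := a.isLt; omega⟩ ⟨b, by have := b.isLt; omega⟩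
            (by show (a : ℕ) < k; exact a.isLt) (by show (b : ℕ) < k; exact b.isLt) hab
          have h3 := congrArg Fin.val h2
          exact Fin.ext h3
        · rw [← hwz]
      · show glue hkn _ _ _ = s
        funext j
        by_cases h : (j : ℕ) < k
        · rw [glue_lt _ _ _ _ _ h]
        · by_cases h' : (j : ℕ) = k
          · have hj : j = ⟨k, hkn⟩ := Fin.ext h'
            rw [hj, glue_k, ← hi0]
          · have hb : (j : ℕ) - (k + 1) < n - (k + 1) := by have := j.isLt; omega
            have hj : j = ⟨k + 1 + ((⟨(j : ℕ) - (k + 1), hb⟩ : Fin (n - (k + 1))) : ℕ),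
                by show k + 1 + ((j : ℕ) - (k + 1)) < n; have := j.isLt; omega⟩ :=
              Fin.ext (by show (j : ℕ) = k + 1 + ((j : ℕ) - (k + 1)); omega)
            conv_lhs => rw [hj]
            refine (glue_hi hkn _ _ _ ⟨(j : ℕ) - (k + 1), hb⟩).trans ?_
            show s ⟨k + 1 + ((j : ℕ) - (k + 1)), _⟩ = s j
            congr 1
            exact Fin.ext (by show k + 1 + ((j : ℕ) - (k + 1)) = (j : ℕ); omega)
  rw [← main, Finset.card_product]
  rw [hS, cardS]
  congr 1
  rw [Finset.card_univ, Fintype.card_prod, Fintype.card_fun, Fintype.card_fin,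
    Fintype.card_fin, Fintype.card_fin]

lemma card_Cn (hn : 0 < n) (z : Fin n) :
    (Finset.univ.filter fun s : Fin n → Fin n =>
        y n s = n ∧ ∃ i : Fin n, (i : ℕ) < n ∧ s i = z).card = n.factorial := by
  have hcongr : (Finset.univ.filter fun s : Fin n → Fin n =>
      y n s = n ∧ ∃ i : Fin n, (i : ℕ) < n ∧ s i = z)
      = Finset.univ.filter fun s : Fin n → Fin n => Function.Injective s := by
    apply Finset.filter_congr
    intro s _
    constructor
    · rintro ⟨hy, -⟩
      exact (y_eq_n_iff hn).1 hy
    · intro hinj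
      refine ⟨(y_eq_n_iff hn).2 hinj, ?_⟩
      obtain ⟨i, hi⟩ := (Finite.injective_iff_surjective.1 hinj) z
      exact ⟨i, i.isLt, hi⟩
  rw [hcongr, card_inj, Nat.descFactorial_self]

end Aux

/-- Under the uniform distribution on sequences `s : Fin n → Fin n` (i.e. `n` independent
uniform values on `{1,…,n}`), the probability that the value `1` appears among
`s_1, …, s_y` (i.e. before the first repetition) equals `R_1(n)/n = (1/n)·Σ_{k=1}^n p_k(n)·k`. -/
theorem prob_one_appears_before_first_repetition (n : ℕ) (hn : 0 < n) :
    ((Finset.univ.filter fun s : Fin n → Fin n =>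
        ∃ i : Fin n, (i : ℕ) < y n s ∧ s i = ⟨0, hn⟩).card : ℝ) / (n : ℝ) ^ n
      = R1 n / (n : ℝ) := by
  classical
  set z : Fin n := ⟨0, hn⟩
  -- fiberwise decomposition over the value of y
  have hfib : (Finset.univ.filter fun s : Fin n → Fin n =>
      ∃ i : Fin n, (i : ℕ) < y n s ∧ s i = z).card
      = ∑ k ∈ Finset.Icc 1 n, (Finset.univ.filter fun s : Fin n → Fin n =>
          y n s = k ∧ ∃ i : Fin n, (i : ℕ) < k ∧ s i = z).card := by
    rw [Finset.card_eq_sum_card_fiberwise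
      (f := fun s => y n s) (t := Finset.Icc 1 n)
      (fun s _ => Finset.mem_Icc.2 ⟨y_ge_one hn s, y_le s⟩)]
    refine Finset.sum_congr rfl fun k hk => ?_
    congr 1
    rw [Finset.filter_filter]
    apply Finset.filter_congr
    intro s _
    constructor
    · rintro ⟨⟨i, hi, hiz⟩, hy⟩
      exact ⟨hy, i, by rwa [← hy], hiz⟩
    · rintro ⟨hy, i, hi, hiz⟩
      exact ⟨⟨i, by rwa [hy], hiz⟩, hy⟩
  rw [hfib]
  rw [R1, Finset.sum_div, Nat.cast_sum, Finset.sum_div]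
  refine Finset.sum_congr rfl fun k hk => ?_
  rw [Finset.mem_Icc] at hk
  obtain ⟨hk1, hkn'⟩ := hk
  have hn0 : (n : ℝ) ≠ 0 := Nat.cast_ne_zero.2 hn.ne'
  clear hfib
  rcases eq_or_lt_of_le hkn' with rfl | hkn
  · -- k = n
    rw [card_Cn hn z, p]
    rw [Nat.sub_self, Nat.factorial_zero, pow_succ]
    field_simp
    ring
  · -- k < n
    rw [card_Ck hk1 hkn z, p]
    have hDle : (n - 1).descFactorial k ≤ n.descFactorial k :=
      Nat.descFactorial_le k (Nat.sub_le n 1)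
    -- the key natural-number identity
    have hDE : (n - k).factorial * (n.descFactorial k - (n - 1).descFactorial k)
        = k * (n - 1).factorial := by
      have h1 : (n - k).factorial * n.descFactorial k = n.factorial :=
        Nat.factorial_mul_descFactorial hkn.le
      have h2 : ((n - 1) - k).factorial * (n - 1).descFactorial k = (n - 1).factorial :=
        Nat.factorial_mul_descFactorial (by omega)
      have h3 : (n - k).factorial = (n - k) * ((n - 1) - k).factorial := by
        have : n - k = ((n - 1) - k) + 1 := by omega
        rw [this, Nat.factorial_succ]
      have h4 : (n - k).factorial * (n - 1).descFactorial k = (n - k) * (n - 1).factorial := by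
        rw [h3, mul_assoc, h2]
      have h5 : n.factorial = n * (n - 1).factorial := (Nat.mul_factorial_pred hn.ne').symm
      have h6 : (n - k).factorial * n.descFactorial k
          = (n - k).factorial * (n - 1).descFactorial k
            + (n - k).factorial * (n.descFactorial k - (n - 1).descFactorial k) := by
        rw [← Nat.mul_add, Nat.add_sub_cancel' hDle]
      have h7 : n * (n - 1).factorial - (n - k) * (n - 1).factorial
          = k * (n - 1).factorial := by
        rw [← Nat.sub_mul]
        congr 1
        omega
      omega
    have hcast : ((n.descFactorial k - (n - 1).descFactorial k : ℕ) : ℝ)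
        = (k : ℝ) * ((n - 1).factorial : ℝ) / (((n - k).factorial : ℝ)) := by
      rw [eq_div_iff (by positivity)]
      rw [mul_comm]
      exact_mod_cast hDE
    have hfac : (n.factorial : ℝ) = (n : ℝ) * ((n - 1).factorial : ℝ) := by
      exact_mod_cast (Nat.mul_factorial_pred hn.ne').symm
    have hpow : (n : ℝ) ^ n = (n : ℝ) ^ (n - (k + 1)) * (n : ℝ) ^ (k + 1) := by
      rw [← pow_add]
      congr 1
      omega
    rw [Nat.cast_mul, Nat.cast_mul, Nat.cast_pow, hcast, hfac, hpow]
    have hfk : (((n - k).factorial : ℕ) : ℝ) ≠ 0 := by positivity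
    field_simp
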